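/- Let G be an undirected graph on n ≥ 2 nodes with Laplacian L and minimum vertex degree d_min. Then λ₂(L) ≤ n·d_min/(n−1). -/

import Mathlib

open scoped RealInnerProductSpace in
lemma inner_toEuclideanLin_eq_sum {n : ℕ} {M : Matrix (Fin n) (Fin n) ℝ}
    (hM : M.IsHermitian) (x : EuclideanSpace ℝ (Fin n)) :
    ⟪x, Matrix.toEuclideanLin M x⟫ =
      ∑ i, hM.eigenvalues i * ⟪hM.eigenvectorBasis i, x⟫ ^ 2 := by
  have hsym : (Matrix.toEuclideanLin M).IsSymmetric :=
    Matrix.isHermitian_iff_isSymmetric.mp hM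
  rw [← OrthonormalBasis.sum_inner_mul_inner hM.eigenvectorBasis x (Matrix.toEuclideanLin M x)]
  refine Finset.sum_congr rfl fun i _ => ?_
  have hb : Matrix.toEuclideanLin M (hM.eigenvectorBasis i)
      = hM.eigenvalues i • hM.eigenvectorBasis i := by
    apply (WithLp.equiv 2 (Fin n → ℝ)).injective
    simpa using hM.mulVec_eigenvectorBasis i
  rw [← hsym (hM.eigenvectorBasis i) x, hb, real_inner_smul_left, real_inner_comm x]
  ring

/-- The eigenvalues of a Hermitian matrix sorted in nondecreasing order. -/
noncomputable def sortedEigs {n : ℕ} {M : Matrix (Fin n) (Fin n) ℝ}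
    (hM : M.IsHermitian) : Fin n → ℝ :=
  hM.eigenvalues ∘ Tuple.sort hM.eigenvalues

open scoped RealInnerProductSpace in
/-- `λ₂(L) ≤ n d_min / (n - 1)` for a graph on `n ≥ 2` nodes with minimum degree `d_min`. -/
theorem lambda2_le_minDegree {n : ℕ} (hn : 2 ≤ n)
    (G : SimpleGraph (Fin n)) [DecidableRel G.Adj]
    (hL : (G.lapMatrix ℝ).IsHermitian) :
    sortedEigs hL ⟨1, by omega⟩ ≤ (n : ℝ) * (G.minDegree : ℝ) / ((n : ℝ) - 1) := by
  haveI : Nonempty (Fin n) := ⟨⟨0, by omega⟩⟩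
  have hn2 : (2:ℝ) ≤ (n:ℝ) := by exact_mod_cast hn
  by_cases hpos : 0 < sortedEigs hL ⟨1, by omega⟩
  swap
  · refine le_trans (not_lt.mp hpos) (div_nonneg (by positivity) (by linarith))
  obtain ⟨v, hv⟩ := G.exists_minimal_degree_vertex
  set lam : ℝ := sortedEigs hL ⟨1, by omega⟩ with hlam
  set b := hL.eigenvectorBasis with hbdef
  set μ := hL.eigenvalues with hμdef
  set σ := Tuple.sort hL.eigenvalues with hσdef
  set i₀ : Fin n := σ ⟨0, by omega⟩ with hi₀
  set T := Matrix.toEuclideanLin (G.lapMatrix ℝ) with hTdef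
  set one : EuclideanSpace ℝ (Fin n) := (WithLp.equiv 2 (Fin n → ℝ)).symm (fun _ => 1) with honedef
  set s : EuclideanSpace ℝ (Fin n) := (WithLp.equiv 2 (Fin n → ℝ)).symm (Pi.single v 1) with hsdef
  set x : EuclideanSpace ℝ (Fin n) := s - (n:ℝ)⁻¹ • one with hxdef
  have hsym : T.IsSymmetric := Matrix.isHermitian_iff_isSymmetric.mp hL
  have hT1 : T one = 0 := by
    rw [honedef, hTdef, WithLp.equiv_symm_apply, Matrix.toEuclideanLin_apply_piLp_toLp,
      G.lapMatrix_mulVec_const_eq_zero]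
    rfl
  have hnonneg : ∀ i, 0 ≤ μ i := fun i => (G.posSemidef_lapMatrix ℝ).eigenvalues_nonneg i
  have hge : ∀ i, i ≠ i₀ → lam ≤ μ i := by
    intro i hi
    have hj : σ.symm i ≠ ⟨0, by omega⟩ := by
      intro h
      apply hi
      rw [hi₀, ← h, Equiv.apply_symm_apply]
    have h1 : (⟨1, by omega⟩ : Fin n) ≤ σ.symm i := by
      rw [Fin.le_def]
      have hne : (σ.symm i).val ≠ 0 := fun h => hj (Fin.ext h)
      show (1:ℕ) ≤ (σ.symm i).val
      omega
    have hmono := Tuple.monotone_sort hL.eigenvalues h1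
    have : lam ≤ μ (σ (σ.symm i)) := hmono
    rwa [Equiv.apply_symm_apply] at this
  have hq1 : ∑ i, μ i * ⟪b i, one⟫ ^ 2 = 0 := by
    rw [← inner_toEuclideanLin_eq_sum hL one, hT1, inner_zero_right]
  have hd0 : ∀ i, i ≠ i₀ → ⟪b i, one⟫ = 0 := by
    intro i hi
    have hterm : μ i * ⟪b i, one⟫ ^ 2 = 0 := by
      have := (Finset.sum_eq_zero_iff_of_nonneg (fun j _ =>
        mul_nonneg (hnonneg j) (sq_nonneg _))).mp hq1 i (Finset.mem_univ i)
      exact this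
    have hμi : 0 < μ i := lt_of_lt_of_le hpos (hge i hi)
    have := (mul_eq_zero.mp hterm).resolve_left (ne_of_gt hμi)
    exact pow_eq_zero_iff (by norm_num) |>.mp this
  have hone_one : ⟪one, one⟫ = (n:ℝ) := by
    simp [honedef, PiLp.inner_apply, RCLike.inner_apply, EuclideanSpace.norm_sq_eq]
  have hone_x : ⟪one, x⟫ = 0 := by
    rw [hxdef, inner_sub_right, real_inner_smul_right, hone_one]
    have hs1 : ⟪one, s⟫ = 1 := by
      simp [honedef, hsdef, PiLp.inner_apply, RCLike.inner_apply, Pi.single_apply]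
    rw [hs1]
    field_simp
    norm_num
  have hd0' : ∀ i, i ≠ i₀ → ⟪one, b i⟫ = (0:ℝ) := fun i hi => by
    rw [← real_inner_comm one (b i)]; exact hd0 i hi
  have hdn : ⟪b i₀, one⟫ ≠ 0 := by
    intro h
    have hP := OrthonormalBasis.sum_inner_mul_inner b one one
    rw [hone_one] at hP
    have : ∑ i, ⟪one, b i⟫ * ⟪b i, one⟫ = 0 := by
      refine Finset.sum_eq_zero fun i _ => ?_
      by_cases hi : i = i₀
      · rw [hi, h, mul_zero]
      · rw [hd0' i hi, zero_mul]
    rw [this] at hP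
    have : (0:ℝ) < n := by linarith
    linarith
  have hc0 : ⟪b i₀, x⟫ = 0 := by
    have hP := OrthonormalBasis.sum_inner_mul_inner b one x
    rw [hone_x] at hP
    rw [Finset.sum_eq_single i₀ (fun i _ hi => by rw [hd0' i hi, zero_mul])
      (fun h => absurd (Finset.mem_univ i₀) h)] at hP
    rw [← real_inner_comm one (b i₀)] at hP
    exact (mul_eq_zero.mp hP).resolve_left hdn
  have hxx : ⟪x, x⟫ = ((n:ℝ) - 1) / n := by
    have hss : ⟪s, s⟫ = 1 := by
      simp [hsdef, PiLp.inner_apply, RCLike.inner_apply, Pi.single_apply]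
    have hs1 : ⟪one, s⟫ = 1 := by
      simp [honedef, hsdef, PiLp.inner_apply, RCLike.inner_apply, Pi.single_apply]
    have hs1' : ⟪s, one⟫ = 1 := by rw [real_inner_comm]; exact hs1
    rw [hxdef, inner_sub_left, inner_sub_right, inner_sub_right, real_inner_smul_left,
      real_inner_smul_right, real_inner_smul_right, real_inner_smul_left, hone_one, hss, hs1, hs1']
    field_simp
    ring
  have hqx : ⟪x, T x⟫ = (G.degree v : ℝ) := by
    have hTx : T x = T s := by
      rw [hxdef, map_sub, map_smul, hT1, smul_zero, sub_zero]
    have honeTs : ⟪one, T s⟫ = 0 := by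
      rw [← hsym one s, hT1, inner_zero_left]
    have hsTs : ⟪s, T s⟫ = (G.degree v : ℝ) := by
      rw [hTdef, hsdef, WithLp.equiv_symm_apply, Matrix.toEuclideanLin_apply_piLp_toLp,
        ← WithLp.equiv_symm_apply]
      have heq : ⟪((WithLp.equiv 2 (Fin n → ℝ)).symm (Pi.single v 1) : EuclideanSpace ℝ (Fin n)),
          (WithLp.equiv 2 (Fin n → ℝ)).symm ((G.lapMatrix ℝ).mulVec (Pi.single v 1))⟫
          = ((G.lapMatrix ℝ).mulVec (Pi.single v 1)) v := by
        simp [PiLp.inner_apply, RCLike.inner_apply, Pi.single_apply]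
      rw [heq, Matrix.mulVec_single]
      simp [SimpleGraph.lapMatrix, SimpleGraph.degMatrix]
    rw [hTx, hxdef, inner_sub_left, real_inner_smul_left, honeTs, mul_zero, sub_zero, hsTs]
  have hpar : ∀ y : EuclideanSpace ℝ (Fin n), ∑ i, ⟪b i, y⟫ ^ 2 = ⟪y, y⟫ := by
    intro y
    rw [← OrthonormalBasis.sum_inner_mul_inner b y y]
    exact Finset.sum_congr rfl fun i _ => by rw [real_inner_comm y, sq]
  have key : lam * (((n:ℝ) - 1) / n) ≤ (G.minDegree : ℝ) := by
    calc lam * (((n:ℝ) - 1) / n) = lam * ⟪x, x⟫ := by rw [hxx]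
      _ = ∑ i, lam * ⟪b i, x⟫ ^ 2 := by rw [← hpar x, Finset.mul_sum]
      _ ≤ ∑ i, μ i * ⟪b i, x⟫ ^ 2 := by
          refine Finset.sum_le_sum fun i _ => ?_
          by_cases hi : i = i₀
          · rw [hi, hc0]; simp
          · exact mul_le_mul_of_nonneg_right (hge i hi) (sq_nonneg _)
      _ = ⟪x, T x⟫ := (inner_toEuclideanLin_eq_sum hL x).symm
      _ = (G.degree v : ℝ) := hqx
      _ = (G.minDegree : ℝ) := by rw [hv]
  have hn0 : (0:ℝ) < n := by linarith
  rw [le_div_iff₀ (show (0:ℝ) < (n:ℝ) - 1 by linarith)]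
  have h2 : lam * (((n:ℝ) - 1) / n) * n ≤ (G.minDegree : ℝ) * n :=
    mul_le_mul_of_nonneg_right key (le_of_lt hn0)
  have h3 : lam * (((n:ℝ) - 1) / n) * n = lam * ((n:ℝ) - 1) := by
    field_simp
  rw [h3] at h2
  linarith
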